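/- Subsequential convergence of iBPG: under the standing assumptions, suppose Σ_k η_k < ∞, Σ_k μ_k < ∞, Σ_k ν_k < ∞, the sequence {x̃^k} is bounded, and the set of minimizers of F over Q is nonempty. Then every cluster point of {x̃^k} is an optimal solution of the problem inf{F(x) : x ∈ Q}. -/

import Mathlib

open Filter Topology RealInnerProductSpace

/-- The Bregman distance associated with the kernel `φ` whose gradient map is `gφ`. -/
noncomputable def breg {E : Type*} [NormedAddCommGroup E] [InnerProductSpace ℝ E]
    (φ : E → ℝ) (gφ : E → E) (x y : E) : ℝ :=
  φ x - φ y - ⟪gφ y, x - y⟫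

/-- The ν-subdifferential of `P` (a proper function with effective domain `domP`) at `x`. -/
def nuSubdiff {E : Type*} [NormedAddCommGroup E] [InnerProductSpace ℝ E]
    (P : E → ℝ) (domP : Set E) (ν : ℝ) (x : E) : Set E :=
  {d : E | ∀ u ∈ domP, P x + ⟪d, u - x⟫ - ν ≤ P u}

open Classical in
/-- Extension of a real-valued function with effective domain `dom` to an `EReal`-valued
function taking the value `⊤` outside `dom`. -/
noncomputable def extFun {E : Type*} (g : E → ℝ) (dom : Set E) : E → EReal :=
  fun x => if x ∈ dom then (g x : EReal) else ⊤

/-- `φ` (with effective domain `domφ` and gradient map `gφ`) is essentially smooth. -/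
def EssentiallySmooth {E : Type*} [NormedAddCommGroup E] [InnerProductSpace ℝ E]
    [FiniteDimensional ℝ E] (φ : E → ℝ) (domφ : Set E) (gφ : E → E) : Prop :=
  (interior domφ).Nonempty ∧
  (∀ x ∈ interior domφ, HasGradientAt φ (gφ x) x) ∧
  ∀ (u : ℕ → E) (u₀ : E), (∀ n, u n ∈ interior domφ) →
    Tendsto u atTop (𝓝 u₀) → u₀ ∈ frontier (interior domφ) →
    Tendsto (fun n => ‖gφ (u n)‖) atTop atTop

/-- The standing assumptions (Assumption A) for the problem `inf {P x + f x : x ∈ Q}`. -/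
structure Standing {E : Type*} [NormedAddCommGroup E] [InnerProductSpace ℝ E]
    [FiniteDimensional ℝ E] (Q domφ domP domf X : Set E)
    (φ P f : E → ℝ) (gφ gf : E → E) (L : ℝ) : Prop where
  hQclosed : IsClosed Q
  hQconv : Convex ℝ Q
  hQint : (interior Q).Nonempty
  hφconv : ConvexOn ℝ domφ φ
  hφstrict : StrictConvexOn ℝ (interior domφ) φ
  hφsmooth : EssentiallySmooth φ domφ gφ
  hφQ : closure domφ = Q
  hPne : domP.Nonempty
  hPconv : ConvexOn ℝ domP P
  hPclosed : LowerSemicontinuous (extFun P domP)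
  hPQ : (domP ∩ interior Q).Nonempty
  hfconv : ConvexOn ℝ domf f
  hfclosed : LowerSemicontinuous (extFun f domf)
  hfdom : domφ ⊆ domf
  hfgrad : ∀ x ∈ interior domφ, HasGradientAt f (gf x) x
  hXclosed : IsClosed X
  hXconv : Convex ℝ X
  hXsup : domP ∩ domφ ⊆ X
  hLnn : 0 ≤ L
  hrel : ∀ u ∈ interior domφ ∩ X, ∀ v ∈ domφ ∩ X,
    f v ≤ f u + ⟪gf u, v - u⟫ + L * breg φ gφ v u

/-- The iBPG iterates with inexactness tolerance sequences `η`, `μ`, `ν`. -/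
structure IBPGIter {E : Type*} [NormedAddCommGroup E] [InnerProductSpace ℝ E]
    [FiniteDimensional ℝ E] (domφ domP X : Set E) (φ P : E → ℝ) (gφ gf : E → E) (L : ℝ)
    (η μ ν : ℕ → ℝ) (x xt : ℕ → E) : Prop where
  hη : ∀ k, 0 ≤ η k
  hμ : ∀ k, 0 ≤ μ k
  hν : ∀ k, 0 ≤ ν k
  hx : ∀ k, x k ∈ X ∩ interior domφ
  hxt : ∀ k, xt k ∈ domP ∩ domφ
  hinex : ∀ k, ∃ d ∈ nuSubdiff P domP (ν k) (xt (k+1)),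
    ‖d + gf (x k) + L • (gφ (x (k+1)) - gφ (x k))‖ ≤ η k
  hdist : ∀ k, breg φ gφ (xt (k+1)) (x (k+1)) ≤ μ k

section Aux

variable {E : Type*} [NormedAddCommGroup E] [InnerProductSpace ℝ E]

/-- Gradient inequality for a convex function at a point of differentiability. -/
lemma grad_ineq [CompleteSpace E]
    {s : Set E} {g : E → ℝ} (hg : ConvexOn ℝ s g) {x G u : E}
    (hx : x ∈ s) (hd : HasGradientAt g G x) (hu : u ∈ s) :
    g x + ⟪G, u - x⟫ ≤ g u := by
  set c : ℝ →ᵃ[ℝ] E := AffineMap.lineMap x u with hc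
  have hcval : ∀ t : ℝ, c t = x + t • (u - x) := by
    intro t; simp [hc, AffineMap.lineMap_apply_module]; module
  set h : ℝ → ℝ := fun t => g (c t) with hh
  have hc0 : c 0 = x := by rw [hcval]; simp
  have hc1 : c 1 = u := by rw [hcval]; simp
  have hconv : ConvexOn ℝ (Set.Icc (0:ℝ) 1) h := by
    refine ConvexOn.subset (hg.comp_affineMap c) ?_ (convex_Icc 0 1)
    intro t ht
    simp only [Set.mem_preimage]
    rw [hcval]
    exact (hg.1).add_smul_sub_mem hx hu ht
  have hderiv : HasDerivAt h ⟪G, u - x⟫ 0 := by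
    have h1 : HasDerivAt (fun t : ℝ => x + t • (u - x)) (u - x) 0 := by
      simpa using ((hasDerivAt_id (0:ℝ)).smul_const (u - x)).const_add x
    have h1' : HasDerivAt c (u - x) 0 := by
      have : (fun t : ℝ => x + t • (u - x)) = fun t => c t := by
        funext t; rw [hcval]
      rwa [this] at h1
    have h2 := (hc0 ▸ hd.hasFDerivAt).comp_hasDerivAt 0 h1'
    simpa [hh, InnerProductSpace.toDual_apply_apply, Function.comp_def] using h2
  have hslope : Tendsto (slope h 0) (𝓝[>] (0:ℝ)) (𝓝 ⟪G, u - x⟫) :=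
    (hasDerivAt_iff_tendsto_slope.1 hderiv).mono_left
      (nhdsWithin_mono 0 (fun t ht => ne_of_gt ht))
  have hle : ∀ᶠ t in 𝓝[>] (0:ℝ), slope h 0 t ≤ h 1 - h 0 := by
    filter_upwards [Ioo_mem_nhdsGT_of_mem (Set.mem_Ico.2 ⟨le_refl (0:ℝ), one_pos⟩)] with t ht
    have hsec := hconv.secant_mono (a := 0) (x := t) (y := 1)
      (Set.mem_Icc.2 ⟨le_refl (0:ℝ), zero_le_one⟩)
      (Set.mem_Icc.2 ⟨ht.1.le, ht.2.le⟩)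
      (Set.mem_Icc.2 ⟨zero_le_one, le_refl (1:ℝ)⟩)
      (ne_of_gt ht.1) one_ne_zero ht.2.le
    simpa [slope_def_field] using hsec
  have := le_of_tendsto hslope hle
  simp only [hh, hc0, hc1] at this
  linarith [this]

/-- The four point identity for Bregman distances. -/
lemma four_point (φ : E → ℝ) (gφ : E → E) (u a b c : E) :
    ⟪gφ a - gφ b, u - c⟫ =
      breg φ gφ u b - breg φ gφ u a + breg φ gφ c a - breg φ gφ c b := by
  simp only [breg, inner_sub_left, inner_sub_right, real_inner_comm]
  ring

/-- For a convex set with nonempty interior, the interior of the closure is contained in the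
interior. -/
lemma convex_interior_closure_subset {F : Type*} [NormedAddCommGroup F] [NormedSpace ℝ F]
    {s : Set F} (hs : Convex ℝ s) (hne : (interior s).Nonempty) :
    interior (closure s) ⊆ interior s := by
  intro z hz
  obtain ⟨y, hy⟩ := hne
  obtain ⟨ε, hε, hball⟩ := Metric.isOpen_iff.1 isOpen_interior z hz
  set t : ℝ := ε / (2 * (‖z - y‖ + 1)) with ht
  have hden : (0:ℝ) < ‖z - y‖ + 1 := by positivity
  have htpos : 0 < t := by positivity
  set w : F := z + t • (z - y) with hw
  have hwball : w ∈ interior (closure s) := by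
    apply hball
    rw [Metric.mem_ball, dist_eq_norm]
    have : ‖w - z‖ = t * ‖z - y‖ := by
      rw [hw]; simp [norm_smul, abs_of_pos htpos]
    rw [this, ht]
    calc ε / (2 * (‖z - y‖ + 1)) * ‖z - y‖
        ≤ ε / (2 * (‖z - y‖ + 1)) * (‖z - y‖ + 1) := by
          apply mul_le_mul_of_nonneg_left (by linarith) (by positivity)
      _ = ε / 2 := by field_simp
      _ < ε := by linarith
  have hwcl : w ∈ closure s := interior_subset hwball
  have hcombo : (t / (1 + t)) • y + (1 / (1 + t)) • w = z := by
    rw [hw, smul_add, smul_smul]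
    have h1t : (1:ℝ) + t ≠ 0 := by positivity
    match_scalars <;> field_simp <;> ring
  have h1t : (0:ℝ) < 1 + t := by positivity
  have := hs.combo_interior_closure_mem_interior (a := t / (1 + t)) (b := 1 / (1 + t)) hy hwcl
    (div_pos htpos h1t) (by positivity)
    (by field_simp; ring)
  rwa [hcombo] at this

/-- The core one-step estimate of iBPG against an arbitrary comparison point `u`. -/
lemma step_core [CompleteSpace E]
    {domf : Set E} {f : E → ℝ} {gf : E → E} (hfconv : ConvexOn ℝ domf f)
    {xk u : E} (hxk : xk ∈ domf) (hgrad : HasGradientAt f (gf xk) xk) (hu : u ∈ domf)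
    {P : E → ℝ} {νk μk ηk L : ℝ} {φ : E → ℝ} {gφ : E → E}
    {xk1 xt1 d : E}
    (hP : P xt1 + ⟪d, u - xt1⟫ - νk ≤ P u)
    (hfrel : f xt1 ≤ f xk + ⟪gf xk, xt1 - xk⟫ + L * breg φ gφ xt1 xk)
    (hdnorm : ‖d + gf xk + L • (gφ xk1 - gφ xk)‖ ≤ ηk)
    (hdist : breg φ gφ xt1 xk1 ≤ μk) (hL : 0 ≤ L) :
    P xt1 + f xt1 ≤ P u + f u + L * breg φ gφ u xk - L * breg φ gφ u xk1
      + L * μk + νk + ηk * ‖xt1 - u‖ := by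
  set Δ : E := d + gf xk + L • (gφ xk1 - gφ xk) with hΔ
  have hgradineq : f xk + ⟪gf xk, u - xk⟫ ≤ f u := grad_ineq hfconv hxk hgrad hu
  have hd_eq : ⟪d, u - xt1⟫ = ⟪Δ, u - xt1⟫ - ⟪gf xk, u - xt1⟫
      - L * ⟪gφ xk1 - gφ xk, u - xt1⟫ := by
    have : d = Δ - gf xk - L • (gφ xk1 - gφ xk) := by rw [hΔ]; abel
    rw [this]
    simp [inner_sub_left, real_inner_smul_left]
  have hCS : -⟪Δ, u - xt1⟫ ≤ ηk * ‖xt1 - u‖ := by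
    have h1 : -⟪Δ, u - xt1⟫ = ⟪Δ, xt1 - u⟫ := by
      rw [← inner_neg_right]; congr 1; abel
    rw [h1]
    calc ⟪Δ, xt1 - u⟫ ≤ ‖Δ‖ * ‖xt1 - u‖ := real_inner_le_norm _ _
      _ ≤ ηk * ‖xt1 - u‖ := mul_le_mul_of_nonneg_right hdnorm (norm_nonneg _)
  have hid := four_point φ gφ u xk1 xk xt1
  have hid' : L * ⟪gφ xk1 - gφ xk, u - xt1⟫
      = L * breg φ gφ u xk - L * breg φ gφ u xk1
        + L * breg φ gφ xt1 xk1 - L * breg φ gφ xt1 xk := by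
    rw [hid]; ring
  have hdist' : L * breg φ gφ xt1 xk1 ≤ L * μk := mul_le_mul_of_nonneg_left hdist hL
  have e1 : ⟪gf xk, u - xt1⟫ = ⟪gf xk, u - xk⟫ - ⟪gf xk, xt1 - xk⟫ := by
    rw [← inner_sub_right]; congr 1; abel
  linarith

/-- Decomposition of a finite `EReal` sum bound into real parts. -/
lemma exists_pq (a b : EReal) (ha : a ≠ ⊥) (hb : b ≠ ⊥) (C : ℝ) (h : (C : EReal) < a + b) :
    ∃ p q : ℝ, (p : EReal) < a ∧ (q : EReal) < b ∧ C = p + q := by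
  induction a with
  | bot => exact absurd rfl ha
  | coe ra =>
    induction b with
    | bot => exact absurd rfl hb
    | coe rb =>
      have hC : C < ra + rb := by
        rw [← EReal.coe_add] at h
        exact_mod_cast h
      refine ⟨ra - (ra + rb - C)/2, rb - (ra + rb - C)/2, ?_, ?_, by ring⟩
      · exact_mod_cast by linarith
      · exact_mod_cast by linarith
    | top =>
      exact ⟨ra - 1, C - (ra - 1), by exact_mod_cast by linarith, EReal.coe_lt_top _,
        by ring⟩
  | top =>
    induction b with
    | bot => exact absurd rfl hb
    | coe rb =>
      exact ⟨C - (rb - 1), rb - 1, EReal.coe_lt_top _,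
        by exact_mod_cast by linarith, by ring⟩
    | top =>
      exact ⟨C/2, C/2, EReal.coe_lt_top _, EReal.coe_lt_top _, by ring⟩

end Aux

/-- **Subsequential convergence of iBPG** (Theorem 3.2(i)). Under the standing assumptions, if
`Σ_k η_k < ∞`, `Σ_k μ_k < ∞`, `Σ_k ν_k < ∞`, the sequence `{x̃^k}` is bounded, and the set of
minimizers of `F = P + f` over `Q` is nonempty, then every cluster point of `{x̃^k}` is an
optimal solution of `inf {F x : x ∈ Q}`. -/
theorem iBPG_subsequential_convergence
    {E : Type*} [NormedAddCommGroup E] [InnerProductSpace ℝ E] [FiniteDimensional ℝ E]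
    (Q domφ domP domf X : Set E) (φ P f : E → ℝ) (gφ gf : E → E) (L : ℝ)
    (hstand : Standing Q domφ domP domf X φ P f gφ gf L)
    (η μ ν : ℕ → ℝ) (x xt : ℕ → E)
    (hiter : IBPGIter domφ domP X φ P gφ gf L η μ ν x xt)
    (h1 : Summable η) (h2 : Summable μ) (h3 : Summable ν)
    (hbdd : Bornology.IsBounded (Set.range xt))
    (hopt : ∃ xstar ∈ domP ∩ domf ∩ Q, ∀ u ∈ domP ∩ domf ∩ Q,
      P xstar + f xstar ≤ P u + f u) :
    ∀ z : E, MapClusterPt z atTop xt →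
      z ∈ domP ∩ domf ∩ Q ∧ ∀ u ∈ domP ∩ domf ∩ Q, P z + f z ≤ P u + f u := by
  classical
  -- bound on the sequence
  obtain ⟨R0, hR0⟩ := isBounded_iff_forall_norm_le.1 hbdd
  set R : ℝ := max R0 0 with hRdef
  have hR : ∀ k, ‖xt k‖ ≤ R := fun k => le_trans (hR0 _ ⟨k, rfl⟩) (le_max_left _ _)
  have hRnn : (0:ℝ) ≤ R := le_max_right _ _
  have hxtf : ∀ k, xt k ∈ domf := fun k => hstand.hfdom (hiter.hxt k).2
  -- nonnegativity of Bregman distances to iterates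
  have hbregnn : ∀ u ∈ domφ, ∀ k, 0 ≤ breg φ gφ u (x k) := by
    intro u hu k
    have hxk := (hiter.hx k).2
    have := grad_ineq hstand.hφconv (interior_subset hxk) (hstand.hφsmooth.2.1 _ hxk) hu
    simp only [breg]; linarith
  -- one-step inequality
  have hstep : ∀ u, u ∈ domP → u ∈ domf → ∀ k,
      P (xt (k+1)) + f (xt (k+1)) ≤ P u + f u + L * breg φ gφ u (x k)
        - L * breg φ gφ u (x (k+1)) + L * μ k + ν k + η k * ‖xt (k+1) - u‖ := by
    intro u huP huf k
    obtain ⟨d, hdmem, hdnorm⟩ := hiter.hinex k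
    have hxk := hiter.hx k
    have hxt1 := hiter.hxt (k+1)
    exact step_core hstand.hfconv (hstand.hfdom (interior_subset hxk.2))
      (hstand.hfgrad _ hxk.2) huf (hdmem u huP)
      (hstand.hrel (x k) ⟨hxk.2, hxk.1⟩ (xt (k+1)) ⟨hxt1.2, hstand.hXsup hxt1⟩)
      hdnorm (hiter.hdist k) hstand.hLnn
  -- frequently the objective value drops below `F u + ε`
  have hfreq : ∀ u, u ∈ domP → u ∈ domφ → ∀ ε > 0, ∀ K : ℕ,
      ∃ k ≥ K, P (xt k) + f (xt k) ≤ P u + f u + ε := by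
    intro u huP huφ ε hε K
    by_contra hcon
    push_neg at hcon
    set σ : ℕ → ℝ := fun k => L * μ k + ν k + η k * (R + ‖u‖) with hσ
    have hRu : (0:ℝ) ≤ R + ‖u‖ := by positivity
    have hσnn : ∀ k, 0 ≤ σ k := fun k =>
      add_nonneg (add_nonneg (mul_nonneg hstand.hLnn (hiter.hμ k)) (hiter.hν k))
        (mul_nonneg (hiter.hη k) hRu)
    have hσsum : Summable σ := ((h2.mul_left L).add h3).add (h1.mul_right (R + ‖u‖))
    set S : ℝ := ∑' k, σ k with hS
    have hstep' : ∀ k, P (xt (k+1)) + f (xt (k+1)) ≤ P u + f u + L * breg φ gφ u (x k)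
        - L * breg φ gφ u (x (k+1)) + σ k := by
      intro k
      have hb := hstep u huP (hstand.hfdom huφ) k
      have hnb : η k * ‖xt (k+1) - u‖ ≤ η k * (R + ‖u‖) := by
        apply mul_le_mul_of_nonneg_left _ (hiter.hη k)
        calc ‖xt (k+1) - u‖ ≤ ‖xt (k+1)‖ + ‖u‖ := norm_sub_le _ _
          _ ≤ R + ‖u‖ := by have := hR (k+1); linarith
      simp only [hσ]; linarith
    have hkey : ∀ m : ℕ, L * breg φ gφ u (x (K + m)) ≤ L * breg φ gφ u (x K)
        + (∑ i ∈ Finset.range m, σ (K + i)) - (m : ℝ) * ε := by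
      intro m
      induction m with
      | zero => simp
      | succ n ih =>
        have hc := hcon (K + n + 1) (by omega)
        have hs := hstep' (K + n)
        rw [Finset.sum_range_succ]
        have harg : K + (n + 1) = K + n + 1 := by omega
        rw [harg]
        push_cast
        linarith
    obtain ⟨m, hm⟩ := exists_nat_gt ((L * breg φ gφ u (x K) + S) / ε)
    have h0 : 0 ≤ L * breg φ gφ u (x (K + m)) :=
      mul_nonneg hstand.hLnn (hbregnn u huφ _)
    have hkm := hkey m
    have hps : ∑ i ∈ Finset.range m, σ (K + i) ≤ S := by
      have hinj : ∀ i ∈ Finset.range m, ∀ j ∈ Finset.range m, K + i = K + j → i = j := by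
        intro i _ j _ h; omega
      have himg : ∑ i ∈ Finset.range m, σ (K + i)
          = ∑ j ∈ (Finset.range m).image (K + ·), σ j := (Finset.sum_image hinj).symm
      rw [himg, hS]
      exact Summable.sum_le_tsum _ (fun i _ => hσnn i) hσsum
    rw [div_lt_iff₀ hε] at hm
    linarith
  -- quasi-decrease of the objective values
  set dδ : ℕ → ℝ := fun k => L * μ k + L * μ (k+1) + ν (k+1) + η (k+1) * (2 * R) with hdδ
  have hdδnn : ∀ k, 0 ≤ dδ k := fun k =>
    add_nonneg (add_nonneg (add_nonneg (mul_nonneg hstand.hLnn (hiter.hμ k))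
      (mul_nonneg hstand.hLnn (hiter.hμ (k+1)))) (hiter.hν (k+1)))
      (mul_nonneg (hiter.hη (k+1)) (by positivity))
  have hdδsum : Summable dδ :=
    (((h2.mul_left L).add (((summable_nat_add_iff 1).2 h2).mul_left L)).add
      ((summable_nat_add_iff 1).2 h3)).add
      (((summable_nat_add_iff 1).2 h1).mul_right (2 * R))
  have hQdec : ∀ k, P (xt (k+1+1)) + f (xt (k+1+1)) ≤ P (xt (k+1)) + f (xt (k+1)) + dδ k := by
    intro k
    have hu1 := hiter.hxt (k+1)
    have hb := hstep (xt (k+1)) hu1.1 (hxtf (k+1)) (k+1)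
    have hA : L * breg φ gφ (xt (k+1)) (x (k+1)) ≤ L * μ k :=
      mul_le_mul_of_nonneg_left (hiter.hdist k) hstand.hLnn
    have hB : 0 ≤ L * breg φ gφ (xt (k+1)) (x (k+1+1)) :=
      mul_nonneg hstand.hLnn (hbregnn _ hu1.2 _)
    have hC : η (k+1) * ‖xt (k+1+1) - xt (k+1)‖ ≤ η (k+1) * (2 * R) := by
      apply mul_le_mul_of_nonneg_left _ (hiter.hη _)
      calc ‖xt (k+1+1) - xt (k+1)‖ ≤ ‖xt (k+1+1)‖ + ‖xt (k+1)‖ := norm_sub_le _ _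
        _ ≤ 2 * R := by have := hR (k+1+1); have := hR (k+1); linarith
    simp only [hdδ]
    linarith
  have hchain : ∀ m j : ℕ, P (xt (m + 1 + j)) + f (xt (m + 1 + j))
      ≤ P (xt (m + 1)) + f (xt (m + 1)) + ∑ i ∈ Finset.range j, dδ (m + i) := by
    intro m j
    induction j with
    | zero => simp
    | succ n ih =>
      have h := hQdec (m + n)
      have e1 : m + 1 + (n + 1) = m + n + 1 + 1 := by omega
      have e2 : m + 1 + n = m + n + 1 := by omega
      rw [e1, Finset.sum_range_succ]
      rw [e2] at ih
      linarith
  set T : ℕ → ℝ := fun m => ∑' i, dδ (i + m) with hT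
  have htail : ∀ m j, ∑ i ∈ Finset.range j, dδ (m + i) ≤ T m := by
    intro m j
    have hsumm : Summable (fun i => dδ (i + m)) := (summable_nat_add_iff m).2 hdδsum
    have he : ∑ i ∈ Finset.range j, dδ (m + i) = ∑ i ∈ Finset.range j, dδ (i + m) := by
      apply Finset.sum_congr rfl; intro i _; rw [Nat.add_comm]
    rw [he, hT]
    exact Summable.sum_le_tsum _ (fun i _ => hdδnn _) hsumm
  have hTto : Tendsto T atTop (𝓝 0) := by
    have hfun : T = fun m => (∑' i, dδ i) - ∑ i ∈ Finset.range m, dδ i := by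
      funext m
      have := Summable.sum_add_tsum_nat_add m hdδsum
      simp only [hT]
      linarith
    rw [hfun]
    have hc : Tendsto (fun _ : ℕ => ∑' i, dδ i) atTop (𝓝 (∑' i, dδ i)) := tendsto_const_nhds
    simpa using hc.sub hdδsum.hasSum.tendsto_sum_nat
  -- eventual bound
  have hev : ∀ u, u ∈ domP → u ∈ domφ → ∀ ε > 0, ∃ N, ∀ k ≥ N,
      P (xt k) + f (xt k) ≤ P u + f u + ε := by
    intro u huP huφ ε hε
    obtain ⟨M, hM⟩ := Metric.tendsto_atTop.1 hTto (ε/2) (by linarith)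
    obtain ⟨m, hmM, hma⟩ := hfreq u huP huφ (ε/2) (by linarith) (M + 1)
    refine ⟨m, fun k hk => ?_⟩
    obtain ⟨m', rfl⟩ : ∃ m', m = m' + 1 := ⟨m - 1, by omega⟩
    obtain ⟨j, rfl⟩ : ∃ j, k = m' + 1 + j := ⟨k - (m' + 1), by omega⟩
    have h := hchain m' j
    have hTb := htail m' j
    have hTm : T m' ≤ ε/2 := by
      have := hM m' (by omega)
      rw [Real.dist_eq, sub_zero] at this
      exact le_trans (le_abs_self _) this.le
    linarith
  -- the cluster point
  intro z hz
  have hz' : ∀ s ∈ 𝓝 z, ∃ᶠ k in atTop, xt k ∈ s := mapClusterPt_iff_frequently.1 hz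
  have hzQ : z ∈ Q := by
    rw [← hstand.hφQ, mem_closure_iff_nhds]
    intro U hU
    obtain ⟨k, hk⟩ := (hz' U hU).exists
    exact ⟨xt k, hk, (hiter.hxt k).2⟩
  obtain ⟨w0, hw0P, hw0Qi⟩ := hstand.hPQ
  have hw0i : w0 ∈ interior domφ := by
    apply convex_interior_closure_subset hstand.hφconv.1 hstand.hφsmooth.1
    rw [hstand.hφQ]; exact hw0Qi
  have hw0φ : w0 ∈ domφ := interior_subset hw0i
  -- key contradiction principle via lower semicontinuity
  have hnebot : ∀ (g : E → ℝ) (dm : Set E) (w : E), extFun g dm w ≠ ⊥ := by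
    intro g dm w; unfold extFun; split <;> simp
  have hkey : ∀ C : ℝ, (∃ N, ∀ k ≥ N, P (xt k) + f (xt k) ≤ C) →
      ¬ ((C : EReal) < extFun P domP z + extFun f domf z) := by
    rintro C ⟨N, hN⟩ hlt
    obtain ⟨p, q, hp, hq, hpq⟩ := exists_pq _ _ (hnebot P domP z) (hnebot f domf z) C hlt
    have hPev := hstand.hPclosed z p hp
    have hfev := hstand.hfclosed z q hq
    have hfreq2 := hz' _ (hPev.and hfev)
    obtain ⟨k, ⟨hpk, hqk⟩, hak⟩ :=
      (hfreq2.and_eventually (eventually_atTop.2 ⟨N, hN⟩)).exists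
    have hPk : extFun P domP (xt k) = ((P (xt k) : ℝ) : EReal) := by
      unfold extFun; rw [if_pos (hiter.hxt k).1]
    have hfk : extFun f domf (xt k) = ((f (xt k) : ℝ) : EReal) := by
      unfold extFun; rw [if_pos (hxtf k)]
    rw [hPk] at hpk; rw [hfk] at hqk
    have hpk' : p < P (xt k) := EReal.coe_lt_coe_iff.1 hpk
    have hqk' : q < f (xt k) := EReal.coe_lt_coe_iff.1 hqk
    linarith
  obtain ⟨N0, hN0⟩ := hev w0 hw0P hw0φ 1 one_pos
  have hzP : z ∈ domP := by
    by_contra hzP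
    apply hkey (P w0 + f w0 + 1) ⟨N0, hN0⟩
    have hPz : extFun P domP z = ⊤ := by unfold extFun; rw [if_neg hzP]
    rw [hPz, EReal.top_add_of_ne_bot (hnebot f domf z)]
    exact EReal.coe_lt_top _
  have hzf : z ∈ domf := by
    by_contra hzf
    apply hkey (P w0 + f w0 + 1) ⟨N0, hN0⟩
    have hfz : extFun f domf z = ⊤ := by unfold extFun; rw [if_neg hzf]
    rw [hfz, EReal.add_top_of_ne_bot (hnebot P domP z)]
    exact EReal.coe_lt_top _
  have hPz : extFun P domP z = ((P z : ℝ) : EReal) := by unfold extFun; rw [if_pos hzP]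
  have hfz : extFun f domf z = ((f z : ℝ) : EReal) := by unfold extFun; rw [if_pos hzf]
  -- optimality against points of `domP ∩ domφ`
  have hbound : ∀ u, u ∈ domP → u ∈ domφ → P z + f z ≤ P u + f u := by
    intro u huP huφ
    by_contra hcon
    push_neg at hcon
    set ε : ℝ := (P z + f z - (P u + f u)) / 2 with hεdef
    have hε : 0 < ε := by simp only [hεdef]; linarith
    obtain ⟨N, hN⟩ := hev u huP huφ ε hε
    apply hkey (P u + f u + ε) ⟨N, hN⟩
    rw [hPz, hfz, ← EReal.coe_add, EReal.coe_lt_coe_iff]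
    simp only [hεdef]; linarith
  refine ⟨⟨⟨hzP, hzf⟩, hzQ⟩, ?_⟩
  rintro u ⟨⟨huP, huf⟩, huQ⟩
  -- approximate `u` by points of `domP ∩ domφ`
  have hF : ∀ t : ℝ, 0 < t → t ≤ 1 →
      P z + f z ≤ P u + f u + t * ((P w0 + f w0) - (P u + f u)) := by
    intro t ht0 ht1
    set ut : E := t • w0 + (1 - t) • u with hut
    have hut_int : ut ∈ interior domφ :=
      hstand.hφconv.1.combo_interior_closure_mem_interior hw0i
        (by rw [hstand.hφQ]; exact huQ) ht0 (by linarith) (by ring)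
    have hut_P : ut ∈ domP := hstand.hPconv.1 hw0P huP (le_of_lt ht0) (by linarith) (by ring)
    have h1b := hbound ut hut_P (interior_subset hut_int)
    have hPc := hstand.hPconv.2 hw0P huP (le_of_lt ht0) (by linarith : (0:ℝ) ≤ 1 - t)
      (by ring : t + (1 - t) = 1)
    have hfc := hstand.hfconv.2 (hstand.hfdom hw0φ) huf (le_of_lt ht0)
      (by linarith : (0:ℝ) ≤ 1 - t) (by ring : t + (1 - t) = 1)
    simp only [smul_eq_mul] at hPc hfc
    rw [← hut] at hPc hfc
    nlinarith [h1b, hPc, hfc]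
  by_contra hcon
  push_neg at hcon
  set D : ℝ := (P w0 + f w0) - (P u + f u) with hD
  set ε : ℝ := P z + f z - (P u + f u) with hε'
  have hε : 0 < ε := by simp only [hε']; linarith
  set t : ℝ := min 1 (ε / (2 * (|D| + 1))) with htdef
  have ht0 : 0 < t := lt_min one_pos (by positivity)
  have hFt := hF t ht0 (min_le_left _ _)
  have htD : t * D ≤ ε / 2 := by
    calc t * D ≤ t * |D| := mul_le_mul_of_nonneg_left (le_abs_self _) ht0.le
      _ ≤ (ε / (2 * (|D| + 1))) * |D| :=
          mul_le_mul_of_nonneg_right (min_le_right _ _) (abs_nonneg _)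
      _ ≤ ε / 2 := by
          rw [div_mul_eq_mul_div, div_le_div_iff₀ (by positivity) (by norm_num)]
          nlinarith [abs_nonneg D]
  have h2D : t * D ≤ (P z + f z - (P u + f u)) / 2 := by
    simpa only [hε'] using htD
  clear_value t D ε
  linarith [hFt, h2D, hcon]
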